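/- Let O be a discrete valuation ring whose maximal ideal is generated by the prime number p. If p > n + 1, then the group GL_n(O) has no element of exact order p. -/

import Mathlib

open Polynomial Finset

lemma prod_pow_sub_one_dvd (p : ℕ) (hp : p.Prime) (hodd : Odd p) :
    (∑ i ∈ Finset.range p, (X : ℤ[X]) ^ i) ∣
      (∏ j ∈ Finset.Ico 1 p, ((X : ℤ[X]) ^ j - 1)) - C (p : ℤ) := by
  haveI : Fact p.Prime := ⟨hp⟩
  set P : ℕ+ := ⟨p, hp.pos⟩ with hP
  have hPp : (P : ℕ) = p := rfl
  set K := CyclotomicField P ℚ with hK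
  haveI := Classical.decEq K
  haveI : IsCyclotomicExtension {(P : ℕ)} ℚ K :=
    haveI : NeZero ((P : ℕ) : ℚ) := ⟨by simp⟩
    CyclotomicField.isCyclotomicExtension _ _
  have hζ : IsPrimitiveRoot (IsCyclotomicExtension.zeta P ℚ K) p :=
    IsCyclotomicExtension.zeta_spec P ℚ K
  set ζ := IsCyclotomicExtension.zeta P ℚ K with hzeta
  have h1mem : (1 : K) ∈ nthRootsFinset p (1 : K) := by
    rw [Polynomial.mem_nthRootsFinset hp.pos]; exact one_pow p
  have hfac : (∑ i ∈ Finset.range p, (X : K[X]) ^ i)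
      = ∏ μ ∈ (nthRootsFinset p (1 : K)).erase 1, (X - C μ) := by
    have hXm1 : (X - 1 : K[X]) ≠ 0 := by
      have := Polynomial.X_sub_C_ne_zero (1 : K)
      simpa using this
    apply mul_right_cancel₀ hXm1
    rw [geom_sum_mul]
    rw [X_pow_sub_one_eq_prod hp.pos hζ]
    rw [← Finset.mul_prod_erase _ _ h1mem]
    ring_nf
    rw [Polynomial.C_1]
    ring
  have hev : ∏ μ ∈ (nthRootsFinset p (1 : K)).erase 1, ((1 : K) - μ) = (p : K) := by
    have := congrArg (Polynomial.eval (1 : K)) hfac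
    simp only [eval_finset_sum, eval_pow, eval_X, one_pow, Finset.sum_const, Finset.card_range,
      nsmul_eq_mul, mul_one, eval_prod, eval_sub, eval_C] at this
    exact this.symm
  have himg : (Finset.Ico 1 p).image (fun j => ζ ^ j) = (nthRootsFinset p (1 : K)).erase 1 := by
    apply Finset.eq_of_subset_of_card_le
    · intro x hx
      simp only [Finset.mem_image] at hx
      obtain ⟨j, hj, rfl⟩ := hx
      rw [Finset.mem_Ico] at hj
      refine Finset.mem_erase.2 ⟨hζ.pow_ne_one_of_pos_of_lt (by omega) hj.2, ?_⟩
      rw [Polynomial.mem_nthRootsFinset hp.pos, ← pow_mul, mul_comm, pow_mul, hζ.pow_eq_one,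
        one_pow]
    · rw [Finset.card_erase_of_mem h1mem, hζ.card_nthRootsFinset,
        Finset.card_image_of_injOn, Nat.card_Ico]
      intro i hi j hj hij
      rw [Finset.mem_coe, Finset.mem_Ico] at hi hj
      exact hζ.pow_inj hi.2 hj.2 hij
  have hinj : Set.InjOn (fun j => ζ ^ j) (Finset.Ico 1 p) := by
    intro i hi j hj hij
    rw [Finset.mem_coe, Finset.mem_Ico] at hi hj
    exact hζ.pow_inj hi.2 hj.2 hij
  have hprodζ : ∏ j ∈ Finset.Ico 1 p, (ζ ^ j - 1) = (p : K) := by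
    have h1 : ∏ j ∈ Finset.Ico 1 p, ((1 : K) - ζ ^ j) = (p : K) := by
      rw [← hev, ← himg, Finset.prod_image hinj]
    calc ∏ j ∈ Finset.Ico 1 p, (ζ ^ j - 1)
        = ∏ j ∈ Finset.Ico 1 p, (-1 * (1 - ζ ^ j)) := by
          apply Finset.prod_congr rfl; intro j _; ring
      _ = (-1 : K) ^ (p - 1) * ∏ j ∈ Finset.Ico 1 p, (1 - ζ ^ j) := by
          rw [Finset.prod_mul_distrib, Finset.prod_const, Nat.card_Ico]
      _ = (p : K) := by
          rw [h1, Even.neg_one_pow (Nat.Odd.sub_odd hodd odd_one), one_mul]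
  have h0 : Polynomial.aeval ζ ((∏ j ∈ Finset.Ico 1 p, ((X : ℤ[X]) ^ j - 1)) - C (p : ℤ)) = 0 := by
    rw [map_sub, map_prod]
    simp only [map_sub, map_pow, aeval_X, map_one, aeval_C]
    rw [hprodζ]
    simp
  have hint : IsIntegral ℤ ζ := hζ.isIntegral hp.pos
  have hdvd := minpoly.isIntegrallyClosed_dvd hint h0
  have hcyc : minpoly ℤ ζ = cyclotomic p ℤ := (Polynomial.cyclotomic_eq_minpoly hζ hp.pos).symm
  rwa [hcyc, Polynomial.cyclotomic_prime ℤ p] at hdvd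

lemma matrix_aux (O : Type*) [CommRing O] [IsDomain O] [IsDiscreteValuationRing O]
    (p : ℕ) (hp : p.Prime) (hodd : Odd p)
    (hmax : IsLocalRing.maximalIdeal O = Ideal.span {(p : O)})
    (r : ℕ) (hr : 0 < r) (hrp : r + 1 < p)
    (T : Matrix (Fin r) (Fin r) O) (hT : ∑ i ∈ Finset.range p, T ^ i = 0) : False := by
  haveI : Fact p.Prime := ⟨hp⟩
  haveI : Nonempty (Fin r) := ⟨⟨0, hr⟩⟩
  have hpO : (p : O) ∈ IsLocalRing.maximalIdeal O := by
    rw [hmax]; exact Ideal.mem_span_singleton_self _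
  have hp0 : (p : O) ≠ 0 := by
    intro h
    apply IsDiscreteValuationRing.not_a_field O
    rw [hmax, h, Ideal.span_singleton_eq_bot]
  have hTp : T ^ p = 1 := by
    have h := geom_sum_mul T p
    rw [hT, zero_mul] at h
    have := h.symm
    rwa [sub_eq_zero] at this
  obtain ⟨G, hG⟩ := prod_pow_sub_one_dvd p hp hodd
  have hsplit : ∀ s : Finset ℕ,
      (Polynomial.aeval T (∏ j ∈ s, ((X : ℤ[X]) ^ j - 1))).det
        = ∏ j ∈ s, (T ^ j - 1).det := by
    intro s
    induction s using Finset.induction_on with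
    | empty => simp
    | @insert a s ha ih =>
        rw [Finset.prod_insert ha, map_mul, Matrix.det_mul, ih, Finset.prod_insert ha]
        congr 1
        simp
  have hdet : ∏ j ∈ Finset.Ico 1 p, (T ^ j - 1).det = (p : O) ^ r := by
    rw [← hsplit]
    have h1 := congrArg (Polynomial.aeval T) hG
    have h2 : Polynomial.aeval T (∑ i ∈ Finset.range p, (X : ℤ[X]) ^ i) = 0 := by
      simp only [map_sum, map_pow, aeval_X]; exact hT
    rw [map_sub, map_mul, h2, zero_mul, sub_eq_zero, aeval_C] at h1
    rw [h1]
    simp only [algebraMap_int_eq, eq_intCast, Int.cast_natCast]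
    rw [← Matrix.diagonal_natCast, Matrix.det_diagonal]
    simp
  -- residue field
  set k := IsLocalRing.ResidueField O with hk
  set π := IsLocalRing.residue O with hπ
  have hpk : (p : k) = 0 := by
    rw [← map_natCast π, IsLocalRing.residue_eq_zero_iff]
    exact hpO
  haveI : CharP k p := by
    have h := CharP.ringChar_of_prime_eq_zero hp hpk
    rw [← h]
    infer_instance
  set U : Matrix (Fin r) (Fin r) k := π.mapMatrix T with hU
  have hUp : U ^ p = 1 := by
    rw [hU, ← map_pow, hTp, map_one]
  have hdvdj : ∀ j ∈ Finset.Ico 1 p, (p : O) ∣ (T ^ j - 1).det := by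
    intro j _
    have hVp : (U ^ j) ^ p = 1 := by
      rw [← pow_mul, mul_comm, pow_mul, hUp, one_pow]
    have hnil : (U ^ j - 1) ^ p = 0 := by
      rw [sub_pow_char_of_commute p (Commute.one_right (U ^ j)), hVp, one_pow, sub_self]
    have hdet0 : (U ^ j - 1).det = 0 := by
      have := congrArg Matrix.det hnil
      rw [Matrix.det_pow, Matrix.det_zero] at this
      exact pow_eq_zero_iff hp.ne_zero |>.mp this
    have h3 : π.mapMatrix (T ^ j - 1) = U ^ j - 1 := by rw [map_sub, map_pow, map_one]
    have hmapdet : π ((T ^ j - 1).det) = 0 := by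
      rw [RingHom.map_det, h3, hdet0]
    rw [IsLocalRing.residue_eq_zero_iff] at hmapdet
    rw [hmax, Ideal.mem_span_singleton] at hmapdet
    exact hmapdet
  -- p^(p-1) ∣ p^r
  have hdvd2 : (p : O) ^ (p - 1) ∣ (p : O) ^ r := by
    rw [← hdet]
    calc (p : O) ^ (p - 1) = ∏ _j ∈ Finset.Ico 1 p, (p : O) := by
          rw [Finset.prod_const, Nat.card_Ico]
      _ ∣ ∏ j ∈ Finset.Ico 1 p, (T ^ j - 1).det :=
          Finset.prod_dvd_prod_of_dvd _ _ hdvdj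
  obtain ⟨c, hc⟩ := hdvd2
  have hr2 : r ≤ p - 1 := by omega
  rw [show (p : O) ^ (p - 1) = (p : O) ^ r * (p : O) ^ (p - 1 - r) by
    rw [← pow_add]; congr 1; omega] at hc
  rw [mul_assoc] at hc
  have h1 : (1 : O) = (p : O) ^ (p - 1 - r) * c :=
    mul_left_cancel₀ (pow_ne_zero r hp0) (by rw [mul_one]; exact hc)
  have hunit : IsUnit (p : O) := by
    have hge : 1 ≤ p - 1 - r := by omega
    rw [show p - 1 - r = 1 + (p - 1 - r - 1) by omega, pow_add, pow_one, mul_assoc] at h1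
    exact IsUnit.of_mul_eq_one _ h1.symm
  exact IsLocalRing.mem_maximalIdeal _ |>.mp hpO hunit

/-- Let `O` be a discrete valuation ring whose maximal ideal is generated by the prime
number `p`.  If `p > n + 1`, then `GL_n(O)` has no element of exact order `p`. -/
theorem gl_no_element_of_exact_order_p
    (O : Type*) [CommRing O] [IsDomain O] [IsDiscreteValuationRing O]
    (p : ℕ) (hp : p.Prime)
    (hmax : IsLocalRing.maximalIdeal O = Ideal.span {(p : O)})
    (n : ℕ) (hpn : p > n + 1) :
    ¬ ∃ g : GL (Fin n) O, g ^ p = 1 ∧ g ≠ 1 := by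
  rintro ⟨g, hgp, hg1⟩
  rcases Nat.eq_zero_or_pos n with hn | hn
  · subst hn
    exact hg1 (Subsingleton.elim g 1)
  have hodd : Odd p := hp.odd_of_ne_two (by omega)
  set A : Matrix (Fin n) (Fin n) O := (g : Matrix (Fin n) (Fin n) O) with hA
  have hApow : A ^ p = 1 := by
    have := congrArg Units.val hgp
    simpa [Units.val_pow_eq_pow_val] using this
  set E := Matrix.toLinAlgEquiv' (n := Fin n) (R := O) with hE
  set Bm : Matrix (Fin n) (Fin n) O := ∑ i ∈ Finset.range p, A ^ i with hBm
  have hBmA : Bm * (A - 1) = 0 := by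
    rw [hBm, geom_sum_mul, hApow, sub_self]
  set M : Submodule O (Fin n → O) := LinearMap.ker (E Bm) with hM
  -- M ≠ ⊥
  have hMne : M ≠ ⊥ := by
    intro hbot
    apply hg1
    have hinj : Function.Injective (E Bm) := by
      rw [← LinearMap.ker_eq_bot, ← hM, hbot]
    have hEA : E (A - 1) = 0 := by
      have h0 : E Bm * E (A - 1) = 0 := by rw [← map_mul, hBmA, map_zero]
      apply LinearMap.ext
      intro x
      apply hinj
      have h1 := congrArg (fun f => f x) h0
      simpa [Module.End.mul_apply] using h1
    have : A - 1 = 0 := by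
      have := E.injective (by rw [hEA, map_zero] : E (A - 1) = E 0)
      simpa using this
    have hA1 : A = 1 := by rwa [sub_eq_zero] at this
    ext i j
    exact congrFun (congrFun hA1 i) j
  -- stable under A
  have hstab : ∀ x ∈ M, E A x ∈ M := by
    intro x hx
    rw [hM, LinearMap.mem_ker] at hx ⊢
    have hcomm : Bm * A = A * Bm := by
      rw [hBm, Finset.sum_mul, Finset.mul_sum]
      exact Finset.sum_congr rfl fun i _ => (pow_mul_comm' A i).symm ▸ rfl
    calc E Bm (E A x) = E (Bm * A) x := by rw [map_mul]; rfl
      _ = E A (E Bm x) := by rw [hcomm, map_mul]; rfl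
      _ = 0 := by rw [hx, map_zero]
  set φ : M →ₗ[O] M := (E A).restrict hstab with hφ
  have hΨφ : (∑ i ∈ Finset.range p, φ ^ i) = 0 := by
    apply LinearMap.ext
    intro x
    apply Subtype.ext
    have hcoe : (((∑ i ∈ Finset.range p, φ ^ i) x : M) : Fin n → O)
        = ∑ i ∈ Finset.range p, ((φ ^ i) x : Fin n → O) := by
      simp
    have hz : ((0 : M →ₗ[O] M) x : Fin n → O) = 0 := rfl
    rw [hz, hcoe]
    have hpow : ∀ i, ((φ ^ i) x : Fin n → O) = (E A ^ i) (x : Fin n → O) := by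
      intro i
      rw [hφ, Module.End.pow_restrict]
      rfl
    have hxM : E Bm (x : Fin n → O) = 0 := LinearMap.mem_ker.mp x.2
    calc ∑ i ∈ Finset.range p, ((φ ^ i) x : Fin n → O)
        = ∑ i ∈ Finset.range p, (E A ^ i) (x : Fin n → O) :=
          Finset.sum_congr rfl fun i _ => hpow i
      _ = (∑ i ∈ Finset.range p, E A ^ i) (x : Fin n → O) := by
          rw [LinearMap.sum_apply]
      _ = E Bm (x : Fin n → O) := by
          congr 1
          rw [hBm, map_sum]
          exact Finset.sum_congr rfl fun i _ => by rw [map_pow]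
      _ = 0 := hxM
  -- free module structure
  haveI : Module.Finite O M := inferInstance
  haveI : Module.Free O M := inferInstance
  set r := Module.finrank O M with hr
  set b : Module.Basis (Fin r) O M := Module.finBasis O M with hb
  have hrpos : 0 < r := by
    rcases Nat.eq_zero_or_pos r with h0 | h0
    · exfalso
      apply hMne
      rw [Submodule.eq_bot_iff]
      intro x hx
      haveI : IsEmpty (Fin r) := by rw [h0]; infer_instance
      haveI : Subsingleton M := b.repr.toEquiv.subsingleton
      have : (⟨x, hx⟩ : M) = (0 : M) := Subsingleton.elim _ _
      exact congrArg Subtype.val this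
    · exact h0
  have hrn : r ≤ n := by
    have h1 := Submodule.finrank_le M
    rwa [Module.finrank_fin_fun] at h1
  set T : Matrix (Fin r) (Fin r) O := LinearMap.toMatrixAlgEquiv b φ with hT
  have hTsum : ∑ i ∈ Finset.range p, T ^ i = 0 := by
    have h := congrArg (LinearMap.toMatrixAlgEquiv b) hΨφ
    rw [map_sum, map_zero] at h
    rw [← h]
    exact Finset.sum_congr rfl fun i _ => by rw [hT, map_pow]
  exact matrix_aux O p hp hodd hmax r hrpos (by omega) T hTsum
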